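/- Let B : [0,1] → ℝ³ be continuously differentiable with σ := min_{t∈[0,1]} ‖B'(t)‖ > 0, and let P : [0,1] → ℝ³ be differentiable at t with ‖B'(t) - P'(t)‖ ≤ δ < σ. Then P'(t) ≠ 0 and the angle θ(t) between B'(t) and P'(t) satisfies 1 - cos θ(t) ≤ 2δ/σ. In particular, if δ < (σ/2)(1 - √3/2), then θ(t) < π/6. -/

import Mathlib

open Real InnerProductGeometry

/-- Let `B : [0,1] → ℝ³` be continuously differentiable with `min ‖B'‖ ≥ σ > 0`, and let
`P` be differentiable at `t` with `‖B'(t) - P'(t)‖ ≤ δ < σ`.  Then `P'(t) ≠ 0`, the angle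
`θ(t)` between `B'(t)` and `P'(t)` satisfies `1 - cos θ(t) ≤ 2δ/σ`, and if moreover
`δ < (σ/2)(1 - √3/2)` then `θ(t) < π/6`. -/
theorem derivative_angle_bound (B P B' : ℝ → EuclideanSpace ℝ (Fin 3))
    (p' : EuclideanSpace ℝ (Fin 3)) (σ δ t : ℝ) (ht : t ∈ Set.Icc (0 : ℝ) 1)
    (hσ : 0 < σ)
    (hB : ∀ s ∈ Set.Icc (0 : ℝ) 1, HasDerivAt B (B' s) s)
    (hBc : ContinuousOn B' (Set.Icc (0 : ℝ) 1))
    (hσmin : ∀ s ∈ Set.Icc (0 : ℝ) 1, σ ≤ ‖B' s‖)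
    (hP : HasDerivAt P p' t)
    (hδ : ‖B' t - p'‖ ≤ δ) (hδσ : δ < σ) :
    p' ≠ 0 ∧
    1 - Real.cos (InnerProductGeometry.angle (B' t) p') ≤ 2 * δ / σ ∧
    (δ < σ / 2 * (1 - Real.sqrt 3 / 2) →
      InnerProductGeometry.angle (B' t) p' < Real.pi / 6) := by
  set x := B' t with hxdef
  have hx : σ ≤ ‖x‖ := hσmin t ht
  have hδ0 : (0:ℝ) ≤ δ := le_trans (norm_nonneg _) hδ
  have htri : ‖x‖ - ‖p'‖ ≤ ‖x - p'‖ := norm_sub_norm_le x p'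
  have hy : σ - δ ≤ ‖p'‖ := by linarith
  have hy0 : 0 < ‖p'‖ := lt_of_lt_of_le (by linarith) hy
  have hp0 : p' ≠ 0 := norm_pos_iff.mp hy0
  have hx0 : 0 < ‖x‖ := lt_of_lt_of_le hσ hx
  have hcos : Real.cos (angle x p') = inner ℝ x p' / (‖x‖ * ‖p'‖) := cos_angle x p'
  have h1 : (inner ℝ x p' : ℝ) = ‖p'‖^2 + inner ℝ (x - p') p' := by
    rw [inner_sub_left, real_inner_self_eq_norm_sq]; ring
  have h2 : |(inner ℝ (x - p') p' : ℝ)| ≤ ‖x - p'‖ * ‖p'‖ := abs_real_inner_le_norm _ _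
  have h3 : -(δ * ‖p'‖) ≤ (inner ℝ (x - p') p' : ℝ) := by
    have := neg_abs_le (inner ℝ (x - p') p' : ℝ)
    nlinarith [norm_nonneg (x - p')]
  have hinner : ‖p'‖^2 - δ * ‖p'‖ ≤ (inner ℝ x p' : ℝ) := by linarith
  have hxy : ‖x‖ ≤ ‖p'‖ + δ := by linarith
  have key : ‖x‖ * ‖p'‖ - (inner ℝ x p' : ℝ) ≤ 2 * δ * ‖p'‖ := by nlinarith
  have hmain : 1 - Real.cos (angle x p') ≤ 2 * δ / σ := by
    rw [hcos]
    have heq : 1 - (inner ℝ x p' : ℝ) / (‖x‖ * ‖p'‖)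
        = (‖x‖ * ‖p'‖ - (inner ℝ x p' : ℝ)) / (‖x‖ * ‖p'‖) := by
      field_simp
    rw [heq, div_le_div_iff₀ (by positivity) hσ]
    nlinarith [mul_le_mul_of_nonneg_right key hσ.le,
      mul_le_mul_of_nonneg_left hx (by positivity : (0:ℝ) ≤ 2 * δ * ‖p'‖)]
  refine ⟨hp0, hmain, fun h => ?_⟩
  by_contra hge
  push_neg at hge
  have hθpi : angle x p' ≤ Real.pi := angle_le_pi x p'
  have hmem1 : Real.pi / 6 ∈ Set.Icc 0 Real.pi := by
    constructor <;> nlinarith [Real.pi_pos]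
  have hmem2 : angle x p' ∈ Set.Icc 0 Real.pi := ⟨angle_nonneg x p', hθpi⟩
  have hcosle : Real.cos (angle x p') ≤ Real.cos (Real.pi / 6) :=
    Real.strictAntiOn_cos.antitoneOn hmem1 hmem2 hge
  rw [Real.cos_pi_div_six] at hcosle
  have h2δσ : 2 * δ / σ < 1 - Real.sqrt 3 / 2 := by
    rw [div_lt_iff₀ hσ]; nlinarith
  linarith
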